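/- Let 1 < M ≤ d+1 and τ > 0. Define the mini-batch DCL loss L(U,V) = (1/M) Σ_{i=1}^M −log( exp(u_i·v_i/τ) / ( Σ_{j≠i} exp(u_i·v_j/τ) + Σ_{j≠i} exp(u_i·u_j/τ) ) ) for M-tuples U, V of unit vectors in ℝ^d, and its symmetric version L_sym(U,V) = ½(L(U,V) + L(V,U)). Then L_sym is minimized over all such (U,V) exactly at the configurations with u_i = v_i for all i and ⟨u_i, u_j⟩ = −1/(M−1) for all i ≠ j; these are the unique minimizers. -/

import Mathlib

open scoped BigOperators RealInnerProductSpace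

noncomputable section

/-- Mini-batch DCL (decoupled contrastive learning) loss with temperature `τ`: the
positive term is removed from the denominator, which contains both views' negatives. -/
def Ldcl (d M : ℕ) (τ : ℝ)
    (U V : Fin M → EuclideanSpace ℝ (Fin d)) : ℝ :=
  (1 / (M : ℝ)) * ∑ i, -Real.log
    (Real.exp (⟪U i, V i⟫ / τ) /
      ((∑ j ∈ Finset.univ.erase i, Real.exp (⟪U i, V j⟫ / τ)) +
        ∑ j ∈ Finset.univ.erase i, Real.exp (⟪U i, U j⟫ / τ)))

/-- Symmetrised DCL loss. -/
def LdclSym (d M : ℕ) (τ : ℝ)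
    (U V : Fin M → EuclideanSpace ℝ (Fin d)) : ℝ :=
  (Ldcl d M τ U V + Ldcl d M τ V U) / 2

open Finset

lemma sum_exp_ge {ι : Type*} (s : Finset ι) (x : ι → ℝ) (m : ℝ)
    (hm : (s.card : ℝ) * m = ∑ k ∈ s, x k) :
    (s.card : ℝ) * Real.exp m ≤ ∑ k ∈ s, Real.exp (x k) := by
  have h : ∀ k ∈ s, Real.exp m * (1 + (x k - m)) ≤ Real.exp (x k) := by
    intro k _
    have h1 := Real.add_one_le_exp (x k - m)
    calc Real.exp m * (1 + (x k - m)) = Real.exp m * ((x k - m) + 1) := by ring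
      _ ≤ Real.exp m * Real.exp (x k - m) :=
          mul_le_mul_of_nonneg_left h1 (Real.exp_nonneg m)
      _ = Real.exp (x k) := by rw [← Real.exp_add]; ring_nf
  have he : ∑ k ∈ s, Real.exp m * (1 + (x k - m)) = (s.card : ℝ) * Real.exp m := by
    have : ∑ k ∈ s, Real.exp m * (1 + (x k - m))
        = Real.exp m * ((s.card : ℝ) + ((∑ k ∈ s, x k) - (s.card : ℝ) * m)) := by
      rw [← Finset.mul_sum]
      congr 1
      rw [Finset.sum_add_distrib, Finset.sum_sub_distrib]
      simp [Finset.sum_const, nsmul_eq_mul]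
    rw [this, ← hm]; ring
  rw [← he]
  exact Finset.sum_le_sum h

/-- Equality case: if the AM-GM bound is tight then all values equal the mean. -/

lemma sum_exp_eq {ι : Type*} (s : Finset ι) (x : ι → ℝ) (m : ℝ)
    (hm : (s.card : ℝ) * m = ∑ k ∈ s, x k)
    (heq : ∑ k ∈ s, Real.exp (x k) = (s.card : ℝ) * Real.exp m) :
    ∀ k ∈ s, x k = m := by
  by_contra hc
  push_neg at hc
  obtain ⟨k₀, hk₀, hne⟩ := hc
  have hstrict : Real.exp m * (1 + (x k₀ - m)) < Real.exp (x k₀) := by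
    have h1 : (x k₀ - m) + 1 < Real.exp (x k₀ - m) :=
      Real.add_one_lt_exp (by intro h; exact hne (by linarith [sub_eq_zero.mp h]))
    calc Real.exp m * (1 + (x k₀ - m)) = Real.exp m * ((x k₀ - m) + 1) := by ring
      _ < Real.exp m * Real.exp (x k₀ - m) :=
          (mul_lt_mul_iff_right₀ (Real.exp_pos m)).mpr h1
      _ = Real.exp (x k₀) := by rw [← Real.exp_add]; ring_nf
  have h : ∀ k ∈ s, Real.exp m * (1 + (x k - m)) ≤ Real.exp (x k) := by
    intro k _
    have h1 := Real.add_one_le_exp (x k - m)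
    calc Real.exp m * (1 + (x k - m)) = Real.exp m * ((x k - m) + 1) := by ring
      _ ≤ Real.exp m * Real.exp (x k - m) :=
          mul_le_mul_of_nonneg_left h1 (Real.exp_nonneg m)
      _ = Real.exp (x k) := by rw [← Real.exp_add]; ring_nf
  have hlt : ∑ k ∈ s, Real.exp m * (1 + (x k - m)) < ∑ k ∈ s, Real.exp (x k) :=
    Finset.sum_lt_sum h ⟨k₀, hk₀, hstrict⟩
  have he : ∑ k ∈ s, Real.exp m * (1 + (x k - m)) = (s.card : ℝ) * Real.exp m := by
    have : ∑ k ∈ s, Real.exp m * (1 + (x k - m))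
        = Real.exp m * ((s.card : ℝ) + ((∑ k ∈ s, x k) - (s.card : ℝ) * m)) := by
      rw [← Finset.mul_sum]
      congr 1
      rw [Finset.sum_add_distrib, Finset.sum_sub_distrib]
      simp [Finset.sum_const, nsmul_eq_mul]
    rw [this, ← hm]; ring
  rw [he, heq] at hlt
  exact lt_irrefl _ hlt

lemma two_exp_ge (a b : ℝ) : 2 * Real.exp ((a+b)/2) ≤ Real.exp a + Real.exp b := by
  have ha : Real.exp a = Real.exp (a/2) * Real.exp (a/2) := by
    rw [← Real.exp_add]; ring_nf
  have hb : Real.exp b = Real.exp (b/2) * Real.exp (b/2) := by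
    rw [← Real.exp_add]; ring_nf
  have hab : Real.exp ((a+b)/2) = Real.exp (a/2) * Real.exp (b/2) := by
    rw [← Real.exp_add]; ring_nf
  nlinarith [sq_nonneg (Real.exp (a/2) - Real.exp (b/2))]

lemma simplex_exists (d M : ℕ) (hM : 1 < M) (hMd : M ≤ d + 1) :
    ∃ W : Fin M → EuclideanSpace ℝ (Fin d), (∀ i, ‖W i‖ = 1) ∧
      ∀ i j, i ≠ j → ⟪W i, W j⟫ = -1 / ((M : ℝ) - 1) := by
  have hM0 : (0:ℝ) < M := by positivity
  have hM1 : (0:ℝ) < (M:ℝ) - 1 := by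
    have : (1:ℝ) < M := by exact_mod_cast hM
    linarith
  let o : EuclideanSpace ℝ (Fin M) := WithLp.toLp 2 (fun _ => (1:ℝ))
  let x : Fin M → EuclideanSpace ℝ (Fin M) :=
    fun i => EuclideanSpace.single i 1 - (M:ℝ)⁻¹ • o
  have hoo : ⟪o, o⟫ = (M:ℝ) := by
    rw [PiLp.inner_apply]; simp [o]
  have heo : ∀ i : Fin M, ⟪EuclideanSpace.single i (1:ℝ), o⟫ = 1 := by
    intro i; simp [o, EuclideanSpace.inner_single_left]
  have hoe : ∀ i : Fin M, ⟪o, EuclideanSpace.single i (1:ℝ)⟫ = 1 := by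
    intro i; simp [o, EuclideanSpace.inner_single_right]
  have hee : ∀ i j : Fin M, ⟪EuclideanSpace.single i (1:ℝ), EuclideanSpace.single j 1⟫
      = if i = j then (1:ℝ) else 0 := by
    intro i j
    simp [EuclideanSpace.inner_single_left, EuclideanSpace.single_apply, eq_comm]
  have hxx : ∀ i j : Fin M, ⟪x i, x j⟫ = (if i = j then (1:ℝ) else 0) - 1 / M := by
    intro i j
    simp only [x, inner_sub_left, inner_sub_right, real_inner_smul_left, real_inner_smul_right,
      hoo, heo, hoe, hee]
    field_simp
    ring
  have hox : ∀ i, ⟪o, x i⟫ = 0 := by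
    intro i
    simp only [x, inner_sub_right, real_inner_smul_right, hoo, hoe]
    field_simp
    ring
  set K := (ℝ ∙ o)ᗮ with hKdef
  have hmem : ∀ i, x i ∈ K := by
    intro i
    rw [hKdef, Submodule.mem_orthogonal_singleton_iff_inner_right]
    exact hox i
  have ho0 : o ≠ 0 := by
    intro h
    have : o ⟨0, by omega⟩ = 0 := by rw [h]; rfl
    simp [o] at this
  have hrank : Module.finrank ℝ K = M - 1 := by
    have h1 : Module.finrank ℝ (ℝ ∙ o) = 1 := finrank_span_singleton ho0
    have h2 := Submodule.finrank_add_finrank_orthogonal (K := (ℝ ∙ o : Submodule ℝ (EuclideanSpace ℝ (Fin M))))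
    have h3 : Module.finrank ℝ (EuclideanSpace ℝ (Fin M)) = M := finrank_euclideanSpace_fin
    rw [hKdef]
    omega
  have hrd : M - 1 ≤ d := by omega
  let B : OrthonormalBasis (Fin (M-1)) ℝ K :=
    (stdOrthonormalBasis ℝ K).reindex (finCongr hrank)
  let f : K → EuclideanSpace ℝ (Fin d) := fun w =>
    WithLp.toLp 2 (fun k => if h : (k : ℕ) < M - 1 then B.repr w ⟨k, h⟩ else 0)
  have hf : ∀ w w' : K, ⟪f w, f w'⟫
      = ⟪(w : EuclideanSpace ℝ (Fin M)), (w' : EuclideanSpace ℝ (Fin M))⟫ := by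
    intro w w'
    have hemb : Function.Injective
        (fun j : Fin (M-1) => (⟨(j:ℕ), lt_of_lt_of_le j.2 hrd⟩ : Fin d)) := by
      intro a b h
      simpa [Fin.ext_iff] using h
    have h0 : ⟪f w, f w'⟫ = ∑ k : Fin d, f w k * f w' k := by
      simp [PiLp.inner_apply, RCLike.inner_apply]
      exact Finset.sum_congr rfl (fun _ _ => mul_comm _ _)
    have hsub : ∑ k : Fin d, f w k * f w' k
        = ∑ k ∈ (univ : Finset (Fin (M-1))).map ⟨_, hemb⟩, f w k * f w' k := by
      refine (Finset.sum_subset (Finset.subset_univ _) ?_).symm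
      intro k _ hk
      have hkr : ¬ ((k:ℕ) < M - 1) := by
        intro hlt
        apply hk
        simp only [Finset.mem_map, Finset.mem_univ, true_and]
        exact ⟨⟨(k:ℕ), hlt⟩, Fin.ext rfl⟩
      simp [f, dif_neg hkr]
    have hterm : ∀ j : Fin (M-1), f w ⟨(j:ℕ), lt_of_lt_of_le j.2 hrd⟩ *
        f w' ⟨(j:ℕ), lt_of_lt_of_le j.2 hrd⟩ = B.repr w j * B.repr w' j := by
      intro j
      simp [f, dif_pos j.2]
    have hBB : (⟪B.repr w, B.repr w'⟫ : ℝ) = ∑ j : Fin (M-1), B.repr w j * B.repr w' j := by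
      rw [PiLp.inner_apply]
      simp only [RCLike.inner_apply, RCLike.conj_to_real, conj_trivial]
      exact Finset.sum_congr rfl (fun _ _ => mul_comm _ _)
    have h1 : (⟪B.repr w, B.repr w'⟫ : ℝ) = ⟪w, w'⟫ := B.repr.inner_map_map w w'
    have h2 : (⟪w, w'⟫ : ℝ)
        = ⟪(w : EuclideanSpace ℝ (Fin M)), (w' : EuclideanSpace ℝ (Fin M))⟫ := rfl
    rw [h0, hsub, Finset.sum_map]
    simp only [Function.Embedding.coeFn_mk, hterm]
    rw [← hBB, h1, h2]
  let c : ℝ := Real.sqrt ((M:ℝ) / ((M:ℝ) - 1))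
  have hc2 : c ^ 2 = (M:ℝ) / ((M:ℝ) - 1) := Real.sq_sqrt (by positivity)
  let W : Fin M → EuclideanSpace ℝ (Fin d) :=
    fun i => f ⟨c • x i, Submodule.smul_mem _ _ (hmem i)⟩
  have hWW : ∀ i j, ⟪W i, W j⟫ = c^2 * ((if i = j then (1:ℝ) else 0) - 1/M) := by
    intro i j
    have h3 := hf ⟨c • x i, Submodule.smul_mem _ _ (hmem i)⟩
      ⟨c • x j, Submodule.smul_mem _ _ (hmem j)⟩
    show ⟪f ⟨c • x i, _⟩, f ⟨c • x j, _⟩⟫ = _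
    rw [h3]
    show (⟪c • x i, c • x j⟫ : ℝ) = _
    rw [real_inner_smul_left, real_inner_smul_right, hxx]
    ring
  refine ⟨W, ?_, ?_⟩
  · intro i
    have h1 : ⟪W i, W i⟫ = 1 := by
      rw [hWW i i, hc2]; field_simp; simp
    have h2 : ‖W i‖ ^ 2 = 1 := by rw [← real_inner_self_eq_norm_sq]; exact h1
    nlinarith [norm_nonneg (W i)]
  · intro i j hij
    rw [hWW i j, if_neg hij, hc2]
    field_simp
    ring

def c0 (M : ℕ) (τ : ℝ) : ℝ :=
  Real.log (2*((M:ℝ)-1)) - 1/τ - 1/(((M:ℝ)-1)*τ)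

lemma Ldcl_simplex (d M : ℕ) (hM : 1 < M) (τ : ℝ) (hτ : 0 < τ)
    (U : Fin M → EuclideanSpace ℝ (Fin d)) (hU : ∀ i, ‖U i‖ = 1)
    (hin : ∀ i j, i ≠ j → ⟪U i, U j⟫ = -1 / ((M:ℝ) - 1)) :
    Ldcl d M τ U U = c0 M τ := by
  have hM1 : (0:ℝ) < (M:ℝ) - 1 := by
    have : (1:ℝ) < M := by exact_mod_cast hM
    linarith
  have hcard : ∀ i : Fin M, ((Finset.univ.erase i).card : ℝ) = (M:ℝ) - 1 := by
    intro i
    rw [Finset.card_erase_of_mem (Finset.mem_univ i)]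
    simp only [Finset.card_univ, Fintype.card_fin]
    have h1 : 1 ≤ M := hM.le
    push_cast [Nat.cast_sub h1]
    ring
  have hterm : ∀ i : Fin M, -Real.log
      (Real.exp (⟪U i, U i⟫ / τ) /
        ((∑ j ∈ Finset.univ.erase i, Real.exp (⟪U i, U j⟫ / τ)) +
          ∑ j ∈ Finset.univ.erase i, Real.exp (⟪U i, U j⟫ / τ))) = c0 M τ := by
    intro i
    have hii : ⟪U i, U i⟫ = 1 := by
      rw [real_inner_self_eq_norm_sq, hU i]; norm_num
    have hsum : ∑ j ∈ Finset.univ.erase i, Real.exp (⟪U i, U j⟫ / τ)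
        = ((M:ℝ) - 1) * Real.exp ((-1 / ((M:ℝ)-1)) / τ) := by
      rw [Finset.sum_congr rfl (fun j hj => by
        rw [hin i j (Ne.symm (Finset.ne_of_mem_erase hj))])]
      rw [Finset.sum_const, nsmul_eq_mul, hcard i]
    rw [hii, hsum]
    have hD : (0:ℝ) < ((M:ℝ) - 1) * Real.exp ((-1 / ((M:ℝ)-1)) / τ) := by positivity
    rw [Real.log_div (Real.exp_ne_zero _) (by linarith : (0:ℝ) < _ + _).ne']
    rw [Real.log_exp]
    have : ((M:ℝ) - 1) * Real.exp ((-1 / ((M:ℝ)-1)) / τ)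
        + ((M:ℝ) - 1) * Real.exp ((-1 / ((M:ℝ)-1)) / τ)
        = (2*((M:ℝ)-1)) * Real.exp ((-1 / ((M:ℝ)-1)) / τ) := by ring
    rw [this, Real.log_mul (by positivity) (Real.exp_ne_zero _), Real.log_exp]
    unfold c0
    field_simp
    ring
  unfold Ldcl
  rw [Finset.sum_congr rfl (fun i _ => hterm i), Finset.sum_const, nsmul_eq_mul]
  simp only [Finset.card_univ, Fintype.card_fin]
  have hM0 : (M:ℝ) ≠ 0 := by positivity
  field_simp

lemma LdclSym_simplex (d M : ℕ) (hM : 1 < M) (τ : ℝ) (hτ : 0 < τ)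
    (U : Fin M → EuclideanSpace ℝ (Fin d)) (hU : ∀ i, ‖U i‖ = 1)
    (hin : ∀ i j, i ≠ j → ⟪U i, U j⟫ = -1 / ((M:ℝ) - 1)) :
    LdclSym d M τ U U = c0 M τ := by
  unfold LdclSym
  rw [Ldcl_simplex d M hM τ hτ U hU hin]
  ring

set_option maxHeartbeats 1000000 in
lemma main_bound (d M : ℕ) (hM : 1 < M) (τ : ℝ) (hτ : 0 < τ)
    (U V : Fin M → EuclideanSpace ℝ (Fin d))
    (hU : ∀ i, ‖U i‖ = 1) (hV : ∀ i, ‖V i‖ = 1) :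
    c0 M τ ≤ LdclSym d M τ U V ∧
      (LdclSym d M τ U V = c0 M τ →
        (∀ i, U i = V i) ∧ ∀ i j, i ≠ j → ⟪U i, U j⟫ = -1 / ((M:ℝ) - 1)) := by
  have hM1 : (1:ℝ) < (M:ℝ) := by exact_mod_cast hM
  set n : ℝ := (M:ℝ) - 1 with hndef
  have hn : 0 < n := by simp [hndef]; linarith
  have hM0 : (0:ℝ) < M := by linarith
  have hcard : ∀ i : Fin M, ((Finset.univ.erase i).card : ℝ) = n := by
    intro i
    rw [Finset.card_erase_of_mem (Finset.mem_univ i)]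
    simp only [Finset.card_univ, Fintype.card_fin]
    push_cast [Nat.cast_sub hM.le]
    simp [hndef]
  have hne : ∀ i : Fin M, (Finset.univ.erase i).Nonempty := by
    intro i
    have h1 : (0:ℝ) < ((Finset.univ.erase i).card : ℝ) := by rw [hcard i]; exact hn
    have h2 : 0 < (Finset.univ.erase i).card := by exact_mod_cast h1
    exact Finset.card_pos.mp h2
  -- abbreviations
  set a : Fin M → ℝ := fun i => ⟪U i, V i⟫ with hadef
  set A : ℝ := ∑ i, a i with hAdef
  set DU : Fin M → ℝ := fun i =>
    (∑ j ∈ Finset.univ.erase i, Real.exp (⟪U i, V j⟫ / τ)) +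
      ∑ j ∈ Finset.univ.erase i, Real.exp (⟪U i, U j⟫ / τ) with hDUdef
  set DV : Fin M → ℝ := fun i =>
    (∑ j ∈ Finset.univ.erase i, Real.exp (⟪V i, U j⟫ / τ)) +
      ∑ j ∈ Finset.univ.erase i, Real.exp (⟪V i, V j⟫ / τ) with hDVdef
  set SU : Fin M → ℝ := fun i =>
    (∑ j ∈ Finset.univ.erase i, ⟪U i, V j⟫) +
      ∑ j ∈ Finset.univ.erase i, ⟪U i, U j⟫ with hSUdef
  set SV : Fin M → ℝ := fun i =>
    (∑ j ∈ Finset.univ.erase i, ⟪V i, U j⟫) +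
      ∑ j ∈ Finset.univ.erase i, ⟪V i, V j⟫ with hSVdef
  obtain ⟨κ, hκ⟩ : ∃ κ : ℝ, κ = 1/(2*n*τ) := ⟨_, rfl⟩
  have hκpos : 0 < κ := by rw [hκ]; positivity
  have hκ2 : 1/(n*τ) = 2*κ := by rw [hκ]; field_simp
  set lU : Fin M → ℝ := fun i => Real.log (2*n) + SU i * κ with hlUdef
  set lV : Fin M → ℝ := fun i => Real.log (2*n) + SV i * κ with hlVdef
  set s : EuclideanSpace ℝ (Fin d) := ∑ i, (U i + V i) with hsdef
  have hDUpos : ∀ i, 0 < DU i := by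
    intro i
    have h1 : 0 < ∑ j ∈ Finset.univ.erase i, Real.exp (⟪U i, V j⟫ / τ) :=
      Finset.sum_pos (fun j _ => Real.exp_pos _) (hne i)
    have h2 : 0 < ∑ j ∈ Finset.univ.erase i, Real.exp (⟪U i, U j⟫ / τ) :=
      Finset.sum_pos (fun j _ => Real.exp_pos _) (hne i)
    simp only [hDUdef]; linarith
  have hDVpos : ∀ i, 0 < DV i := by
    intro i
    have h1 : 0 < ∑ j ∈ Finset.univ.erase i, Real.exp (⟪V i, U j⟫ / τ) :=
      Finset.sum_pos (fun j _ => Real.exp_pos _) (hne i)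
    have h2 : 0 < ∑ j ∈ Finset.univ.erase i, Real.exp (⟪V i, V j⟫ / τ) :=
      Finset.sum_pos (fun j _ => Real.exp_pos _) (hne i)
    simp only [hDVdef]; linarith
  -- rewrite the two losses
  have hL1 : Ldcl d M τ U V = (1/(M:ℝ)) * ∑ i, (Real.log (DU i) - a i / τ) := by
    unfold Ldcl
    congr 1
    refine Finset.sum_congr rfl (fun i _ => ?_)
    rw [Real.log_div (Real.exp_ne_zero _) (hDUpos i).ne', Real.log_exp]
    simp only [hadef]
    ring
  have hL2 : Ldcl d M τ V U = (1/(M:ℝ)) * ∑ i, (Real.log (DV i) - a i / τ) := by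
    unfold Ldcl
    congr 1
    refine Finset.sum_congr rfl (fun i _ => ?_)
    rw [Real.log_div (Real.exp_ne_zero _) (hDVpos i).ne', Real.log_exp]
    have : ⟪V i, U i⟫ = a i := real_inner_comm _ _
    rw [this]
    ring
  -- per-index AM-GM lower bounds
  have hgapU : ∀ i, lU i ≤ Real.log (DU i) := by
    intro i
    set s1 : ℝ := ∑ j ∈ Finset.univ.erase i, ⟪U i, V j⟫ with hs1
    set s2 : ℝ := ∑ j ∈ Finset.univ.erase i, ⟪U i, U j⟫ with hs2
    have hb1 : n * Real.exp (s1/(n*τ)) ≤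
        ∑ j ∈ Finset.univ.erase i, Real.exp (⟪U i, V j⟫ / τ) := by
      have := sum_exp_ge (Finset.univ.erase i) (fun j => ⟪U i, V j⟫ / τ) (s1/(n*τ)) ?_
      · rwa [hcard i] at this
      · rw [hcard i, ← Finset.sum_div, ← hs1]
        field_simp
        try ring
    have hb2 : n * Real.exp (s2/(n*τ)) ≤
        ∑ j ∈ Finset.univ.erase i, Real.exp (⟪U i, U j⟫ / τ) := by
      have := sum_exp_ge (Finset.univ.erase i) (fun j => ⟪U i, U j⟫ / τ) (s2/(n*τ)) ?_
      · rwa [hcard i] at this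
      · rw [hcard i, ← Finset.sum_div, ← hs2]
        field_simp
        try ring
    have hb3 : 2 * Real.exp ((s1/(n*τ) + s2/(n*τ))/2) ≤
        Real.exp (s1/(n*τ)) + Real.exp (s2/(n*τ)) := two_exp_ge _ _
    have hmean : (s1/(n*τ) + s2/(n*τ))/2 = SU i / (2*n*τ) := by
      have h7 : SU i = s1 + s2 := by simp only [hSUdef]; try rw [hs1, hs2]
      rw [h7, ← add_div, div_div]
      ring_nf
    have hDU : 2*n * Real.exp (SU i / (2*n*τ)) ≤ DU i := by
      rw [← hmean]
      simp only [hDUdef]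
      linarith [mul_le_mul_of_nonneg_left hb3 hn.le]
    have hpos : (0:ℝ) < 2*n * Real.exp (SU i / (2*n*τ)) := by positivity
    have h8 := Real.log_le_log hpos hDU
    rw [Real.log_mul (by positivity) (Real.exp_ne_zero _), Real.log_exp] at h8
    have h9 : SU i / (2*n*τ) = SU i * κ := by rw [hκ, mul_one_div]
    rw [h9] at h8
    exact h8
  have hgapV : ∀ i, lV i ≤ Real.log (DV i) := by
    intro i
    set s1 : ℝ := ∑ j ∈ Finset.univ.erase i, ⟪V i, U j⟫ with hs1
    set s2 : ℝ := ∑ j ∈ Finset.univ.erase i, ⟪V i, V j⟫ with hs2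
    have hb1 : n * Real.exp (s1/(n*τ)) ≤
        ∑ j ∈ Finset.univ.erase i, Real.exp (⟪V i, U j⟫ / τ) := by
      have := sum_exp_ge (Finset.univ.erase i) (fun j => ⟪V i, U j⟫ / τ) (s1/(n*τ)) ?_
      · rwa [hcard i] at this
      · rw [hcard i, ← Finset.sum_div, ← hs1]
        field_simp
        try ring
    have hb2 : n * Real.exp (s2/(n*τ)) ≤
        ∑ j ∈ Finset.univ.erase i, Real.exp (⟪V i, V j⟫ / τ) := by
      have := sum_exp_ge (Finset.univ.erase i) (fun j => ⟪V i, V j⟫ / τ) (s2/(n*τ)) ?_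
      · rwa [hcard i] at this
      · rw [hcard i, ← Finset.sum_div, ← hs2]
        field_simp
        try ring
    have hb3 : 2 * Real.exp ((s1/(n*τ) + s2/(n*τ))/2) ≤
        Real.exp (s1/(n*τ)) + Real.exp (s2/(n*τ)) := two_exp_ge _ _
    have hmean : (s1/(n*τ) + s2/(n*τ))/2 = SV i / (2*n*τ) := by
      have h7 : SV i = s1 + s2 := by simp only [hSVdef]; try rw [hs1, hs2]
      rw [h7, ← add_div, div_div]
      ring_nf
    have hDV : 2*n * Real.exp (SV i / (2*n*τ)) ≤ DV i := by
      rw [← hmean]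
      simp only [hDVdef]
      linarith [mul_le_mul_of_nonneg_left hb3 hn.le]
    have hpos : (0:ℝ) < 2*n * Real.exp (SV i / (2*n*τ)) := by positivity
    have h8 := Real.log_le_log hpos hDV
    rw [Real.log_mul (by positivity) (Real.exp_ne_zero _), Real.log_exp] at h8
    have h9 : SV i / (2*n*τ) = SV i * κ := by rw [hκ, mul_one_div]
    rw [h9] at h8
    exact h8
  -- the sum identity
  have hsum : (∑ i, SU i) + (∑ i, SV i) = ‖s‖^2 - 2*(M:ℝ) - 2*A := by
    have hnorm : ‖s‖^2 = ∑ i, ∑ j, ⟪U i + V i, U j + V j⟫ := by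
      rw [← real_inner_self_eq_norm_sq, hsdef, sum_inner]
      refine Finset.sum_congr rfl (fun i _ => ?_)
      rw [inner_sum]
    have hsplit : ∀ i : Fin M, ∑ j, ⟪U i + V i, U j + V j⟫
        = (2 + 2 * a i) + (SU i + SV i) := by
      intro i
      rw [← Finset.add_sum_erase _ _ (Finset.mem_univ i)]
      have hdiag : ⟪U i + V i, U i + V i⟫ = 2 + 2 * a i := by
        have h1 : ⟪U i, U i⟫ = 1 := by
          rw [real_inner_self_eq_norm_sq, hU i]; norm_num
        have h2 : ⟪V i, V i⟫ = 1 := by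
          rw [real_inner_self_eq_norm_sq, hV i]; norm_num
        have h3 : ⟪V i, U i⟫ = a i := real_inner_comm _ _
        have h4 : ⟪U i, V i⟫ = a i := rfl
        rw [inner_add_left, inner_add_right, inner_add_right, h1, h2, h3, h4]
        ring
      have hoff : ∑ j ∈ Finset.univ.erase i, ⟪U i + V i, U j + V j⟫ = SU i + SV i := by
        have h5 : SU i + SV i = ∑ j ∈ Finset.univ.erase i,
            (⟪U i, V j⟫ + ⟪U i, U j⟫ + (⟪V i, U j⟫ + ⟪V i, V j⟫)) := by
          simp only [hSUdef, hSVdef, ← Finset.sum_add_distrib]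
        rw [h5]
        refine Finset.sum_congr rfl (fun j _ => ?_)
        rw [inner_add_left, inner_add_right, inner_add_right]
        ring
      rw [hdiag, hoff]
    rw [hnorm, Finset.sum_congr rfl (fun i _ => hsplit i)]
    rw [Finset.sum_add_distrib, Finset.sum_add_distrib, Finset.sum_add_distrib]
    simp only [hSUdef, hSVdef, Finset.sum_add_distrib, Finset.sum_const, Finset.card_univ,
      Fintype.card_fin, nsmul_eq_mul, ← Finset.mul_sum, ← hAdef]
    ring
  -- a i ≤ 1 and A ≤ M
  have ha1 : ∀ i, a i ≤ 1 := by
    intro i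
    have := real_inner_le_norm (U i) (V i)
    rwa [hU i, hV i, one_mul] at this
  have hAM : A ≤ (M:ℝ) := by
    calc A ≤ ∑ _i : Fin M, (1:ℝ) := Finset.sum_le_sum (fun i _ => ha1 i)
      _ = M := by simp
  -- the master identity
  have hstar : 2*(M:ℝ)*(LdclSym d M τ U V) = 2*(M:ℝ)*(c0 M τ)
      + ((∑ i, (Real.log (DU i) - lU i)) + (∑ i, (Real.log (DV i) - lV i)))
      + ‖s‖^2*κ + 2*(κ + 1/τ)*((M:ℝ) - A) := by
    have e1 : ∑ i, (Real.log (DU i) - a i / τ) = (∑ i, Real.log (DU i)) - A/τ := by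
      rw [Finset.sum_sub_distrib, ← Finset.sum_div, ← hAdef]
    have e2 : ∑ i, (Real.log (DV i) - a i / τ) = (∑ i, Real.log (DV i)) - A/τ := by
      rw [Finset.sum_sub_distrib, ← Finset.sum_div, ← hAdef]
    have e3 : ∑ i, (Real.log (DU i) - lU i) = (∑ i, Real.log (DU i)) - ∑ i, lU i :=
      Finset.sum_sub_distrib _ _
    have e4 : ∑ i, (Real.log (DV i) - lV i) = (∑ i, Real.log (DV i)) - ∑ i, lV i :=
      Finset.sum_sub_distrib _ _
    have e5 : (∑ i, lU i) + (∑ i, lV i)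
        = 2*(M:ℝ)*Real.log (2*n) + (‖s‖^2 - 2*(M:ℝ) - 2*A)*κ := by
      simp only [hlUdef, hlVdef]
      rw [Finset.sum_add_distrib, Finset.sum_add_distrib]
      simp only [Finset.sum_const, Finset.card_univ, Fintype.card_fin, nsmul_eq_mul,
        ← Finset.sum_mul]
      rw [← hsum]
      ring
    have hMne : (M:ℝ) ≠ 0 := hM0.ne'
    have hL1' : (M:ℝ) * Ldcl d M τ U V = (∑ i, Real.log (DU i)) - A/τ := by
      rw [hL1, e1, ← mul_assoc, mul_one_div_cancel hMne, one_mul]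
    have hL2' : (M:ℝ) * Ldcl d M τ V U = (∑ i, Real.log (DV i)) - A/τ := by
      rw [hL2, e2, ← mul_assoc, mul_one_div_cancel hMne, one_mul]
    have hc0 : c0 M τ = Real.log (2*n) - 1/τ - 2*κ := by
      unfold c0; rw [← hκ2, hndef]
    unfold LdclSym
    rw [e3, e4, hc0]
    linear_combination hL1' + hL2' + e5
  -- nonnegativity of the pieces
  have hgapsumU : 0 ≤ ∑ i, (Real.log (DU i) - lU i) :=
    Finset.sum_nonneg (fun i _ => by linarith [hgapU i])
  have hgapsumV : 0 ≤ ∑ i, (Real.log (DV i) - lV i) :=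
    Finset.sum_nonneg (fun i _ => by linarith [hgapV i])
  have hQ : 0 ≤ ‖s‖^2*κ := by positivity
  have hMA : 0 ≤ (M:ℝ) - A := by linarith
  have hκτ : 0 < κ + 1/τ := by positivity
  have hR : 0 ≤ 2*(κ + 1/τ)*((M:ℝ) - A) := by
    apply mul_nonneg (by positivity) hMA
  have hlow : c0 M τ ≤ LdclSym d M τ U V := by
    by_contra hcon
    push_neg at hcon
    have := mul_lt_mul_of_pos_left hcon (by linarith : (0:ℝ) < 2*M)
    linarith
  refine ⟨hlow, ?_⟩
  intro heq
  rw [heq] at hstar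
  have hz1 : (∑ i, (Real.log (DU i) - lU i)) = 0 := by linarith
  have hz2 : (∑ i, (Real.log (DV i) - lV i)) = 0 := by linarith
  have hz3 : ‖s‖^2*κ = 0 := by linarith
  have hz4 : 2*(κ + 1/τ)*((M:ℝ) - A) = 0 := by linarith
  -- A = M hence U i = V i
  have hA_M : A = (M:ℝ) := by
    rcases mul_eq_zero.mp hz4 with h|h
    · exact absurd h (by positivity : (0:ℝ) < 2*(κ + 1/τ)).ne'
    · linarith
  have haeq : ∀ i, a i = 1 := by
    have hsum0 : ∑ i : Fin M, (1 - a i) = 0 := by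
      rw [Finset.sum_sub_distrib, ← hAdef, hA_M]
      simp
    intro i
    have := (Finset.sum_eq_zero_iff_of_nonneg
      (fun j _ => by linarith [ha1 j])).mp hsum0 i (Finset.mem_univ i)
    linarith
  have hUV : ∀ i, U i = V i := by
    intro i
    have h1 : (⟪U i, V i⟫ : ℝ) = 1 := by
      have := haeq i
      simpa only [hadef] using this
    exact (inner_eq_one_iff_of_norm_eq_one (hU i) (hV i)).mp h1
  -- sum of U is zero
  have hs0 : s = 0 := by
    have h1 : ‖s‖^2 = 0 := by
      rcases mul_eq_zero.mp hz3 with h|h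
      · exact h
      · exact absurd h hκpos.ne'
    have h2 : ‖s‖ = 0 := by
      have := pow_eq_zero_iff (n := 2) (by norm_num) |>.mp h1
      exact this
    exact norm_eq_zero.mp h2
  have hsumU : ∑ i, U i = 0 := by
    have h1 : s = (2:ℝ) • ∑ i, U i := by
      rw [hsdef, Finset.sum_add_distrib]
      have h2 : ∑ i, V i = ∑ i, U i := Finset.sum_congr rfl (fun i _ => (hUV i).symm)
      rw [h2, two_smul]
    rw [hs0] at h1
    have := h1.symm
    rcases smul_eq_zero.mp this with h|h
    · norm_num at h
    · exact h
  have hinnersum : ∀ i : Fin M, ∑ j ∈ Finset.univ.erase i, ⟪U i, U j⟫ = -1 := by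
    intro i'
    have h1 : ∑ j, ⟪U i', U j⟫ = (0:ℝ) := by
      rw [← inner_sum, hsumU, inner_zero_right]
    have h2 : ⟪U i', U i'⟫ = 1 := by
      rw [real_inner_self_eq_norm_sq, hU i']; norm_num
    have h3 := Finset.add_sum_erase Finset.univ (fun j => (⟪U i', U j⟫:ℝ)) (Finset.mem_univ i')
    rw [h2] at h3
    rw [h1] at h3
    linarith
  have hEU : ∀ i, Real.log (DU i) = lU i := by
    intro i'
    have := (Finset.sum_eq_zero_iff_of_nonneg
      (fun j' _ => by linarith [hgapU j'])).mp hz1 i' (Finset.mem_univ i')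
    linarith
  refine ⟨hUV, ?_⟩
  intro i j hij
  have hsumcongr : ∑ j' ∈ Finset.univ.erase i, Real.exp (⟪U i, V j'⟫/τ)
      = ∑ j' ∈ Finset.univ.erase i, Real.exp (⟪U i, U j'⟫/τ) :=
    Finset.sum_congr rfl (fun j' _ => by rw [← hUV j'])
  have hDUi : DU i = 2 * ∑ j' ∈ Finset.univ.erase i, Real.exp (⟪U i, U j'⟫/τ) := by
    simp only [hDUdef]
    rw [hsumcongr]
    ring
  have hSUi : SU i = -2 := by
    simp only [hSUdef]
    have h4 : ∑ j' ∈ Finset.univ.erase i, (⟪U i, V j'⟫:ℝ)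
        = ∑ j' ∈ Finset.univ.erase i, (⟪U i, U j'⟫:ℝ) :=
      Finset.sum_congr rfl (fun j' _ => by rw [← hUV j'])
    rw [h4, hinnersum i]
    norm_num
  have hlUi : lU i = Real.log (2*n) + (-2)*κ := by
    simp only [hlUdef, hSUi]
  have hDUval : DU i = 2*n*Real.exp ((-2)*κ) := by
    have h1 : DU i = Real.exp (Real.log (DU i)) := (Real.exp_log (hDUpos i)).symm
    rw [hEU i, hlUi, Real.exp_add, Real.exp_log (by positivity : (0:ℝ) < 2*n)] at h1
    rw [h1]
  have hsexp : ∑ j' ∈ Finset.univ.erase i, Real.exp (⟪U i, U j'⟫/τ)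
      = ((Finset.univ.erase i).card : ℝ) * Real.exp ((-2)*κ) := by
    rw [hcard i]
    have h5 := hDUi.symm.trans hDUval
    linear_combination h5 / 2
  have hmm : ((Finset.univ.erase i).card : ℝ) * ((-2)*κ)
      = ∑ j' ∈ Finset.univ.erase i, (⟪U i, U j'⟫:ℝ)/τ := by
    rw [hcard i, ← Finset.sum_div, hinnersum i, hκ]
    field_simp
    try ring
    try exact Or.inl trivial
  have hfin := sum_exp_eq (Finset.univ.erase i) (fun j' => (⟪U i, U j'⟫:ℝ)/τ) ((-2)*κ)
    hmm hsexp j (Finset.mem_erase.mpr ⟨Ne.symm hij, Finset.mem_univ j⟩)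
  rw [hκ] at hfin
  have hτne : τ ≠ 0 := hτ.ne'
  have hnne : n ≠ 0 := hn.ne'
  rw [div_eq_iff hτne] at hfin
  rw [hfin]
  field_simp

theorem stmt_4 (d M : ℕ) (hM : 1 < M) (hMd : M ≤ d + 1) (τ : ℝ) (hτ : 0 < τ) :
    ∀ U V : Fin M → EuclideanSpace ℝ (Fin d),
      (∀ i, ‖U i‖ = 1) → (∀ i, ‖V i‖ = 1) →
      ((∀ U' V' : Fin M → EuclideanSpace ℝ (Fin d),
          (∀ i, ‖U' i‖ = 1) → (∀ i, ‖V' i‖ = 1) →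
          LdclSym d M τ U V ≤ LdclSym d M τ U' V') ↔
        ((∀ i, U i = V i) ∧
          ∀ i j, i ≠ j → ⟪U i, U j⟫ = -1 / ((M : ℝ) - 1)))  := by
  intro U V hU hV
  constructor
  · intro hmin
    obtain ⟨W, hW1, hW2⟩ := simplex_exists d M hM hMd
    have h1 : LdclSym d M τ U V ≤ c0 M τ := by
      have := hmin W W hW1 hW1
      rwa [LdclSym_simplex d M hM τ hτ W hW1 hW2] at this
    have h2 := main_bound d M hM τ hτ U V hU hV
    exact h2.2 (le_antisymm h1 h2.1)
  · rintro ⟨h1, h2⟩ U' V' hU' hV'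
    have hVU : V = U := funext (fun i => (h1 i).symm)
    have hval : LdclSym d M τ U V = c0 M τ := by
      rw [hVU]
      exact LdclSym_simplex d M hM τ hτ U hU h2
    rw [hval]
    exact (main_bound d M hM τ hτ U' V' hU' hV').1
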